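/- Every eigenvalue of the complex m×m matrix K(ζ) = (-ζX+Y)^{-1} X (ζX+Y)^{-1} X, where X is real skew-symmetric, Y real symmetric, and ζX+Y invertible, has even algebraic multiplicity, provided m is even and X is invertible. -/

import Mathlib

open Matrix Polynomial

noncomputable def Gpencil (m : ℕ) (X Y : Matrix (Fin m) (Fin m) ℝ) (z : ℂ) :
    Matrix (Fin m) (Fin m) ℂ :=
  z • X.map Complex.ofReal + Y.map Complex.ofReal

noncomputable def Kzeta' (m : ℕ) (X Y : Matrix (Fin m) (Fin m) ℝ) (z : ℂ) :
    Matrix (Fin m) (Fin m) ℂ :=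
  (Gpencil m X Y (-z))⁻¹ * X.map Complex.ofReal *
    (Gpencil m X Y z)⁻¹ * X.map Complex.ofReal

/-- Evaluation of the characteristic polynomial is a determinant. -/
lemma evalCharpoly {n : Type*} [Fintype n] [DecidableEq n] (M : Matrix n n ℂ) (t : ℂ) :
    M.charpoly.eval t = (t • (1 : Matrix n n ℂ) - M).det := by
  rw [Matrix.charpoly, _root_.eval_det, matPolyEquiv_charmatrix]
  congr 1
  simp only [eval_sub, eval_X, eval_C]
  congr 1
  ext i j
  simp [Matrix.scalar_apply, Matrix.smul_apply, Matrix.one_apply, Matrix.diagonal_apply]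

/-- Spectral mapping for determinants of polynomials of a matrix over `ℂ`. -/
lemma detAeval {n : Type*} [Fintype n] [DecidableEq n] (A : Matrix n n ℂ)
    (h : Multiset.card A.charpoly.roots = Fintype.card n) (q : ℂ[X]) :
    (Polynomial.aeval A q).det = (A.charpoly.roots.map fun μ => q.eval μ).prod := by
  classical
  set R := A.charpoly.roots with hR
  let D : ℂ[X] →* ℂ := Matrix.detMonoidHom.comp
    ((Polynomial.aeval A : ℂ[X] →ₐ[ℂ] Matrix n n ℂ) : ℂ[X] →* Matrix n n ℂ)
  let E : ℂ[X] →* ℂ :=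
    { toFun := fun r => (R.map fun μ => r.eval μ).prod
      map_one' := by simp
      map_mul' := fun r s => by
        simp only [eval_mul]
        rw [← Multiset.prod_map_mul] }
  have hDE : ∀ a : ℂ, D (X - C a) = E (X - C a) := by
    intro a
    have h1 : D (X - C a) = (A - a • 1).det := by
      simp [D, Matrix.detMonoidHom, Algebra.algebraMap_eq_smul_one]
    have h2 : (A - a • 1).det = (-1 : ℂ) ^ Fintype.card n * (a • (1 : Matrix n n ℂ) - A).det := by
      rw [← Matrix.det_neg]
      congr 1
      abel
    have h3 : A.charpoly = (R.map fun μ => X - C μ).prod :=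
      Polynomial.Splits.eq_prod_roots_of_monic
        (IsAlgClosed.splits _) (A.charpoly_monic)
    have h4 : (a • (1 : Matrix n n ℂ) - A).det = (R.map fun μ => a - μ).prod := by
      rw [← evalCharpoly, h3, Polynomial.eval_multiset_prod, Multiset.map_map]
      simp
    rw [h1, h2, h4]
    show _ = (R.map fun μ => (X - C a).eval μ).prod
    simp only [eval_sub, eval_X, eval_C]
    have : (R.map fun μ => μ - a) = R.map fun μ => (-1) * (a - μ) := by
      apply Multiset.map_congr rfl
      intro x _; ring
    rw [this, Multiset.prod_map_mul, ← h]
    simp [Multiset.map_const', Multiset.prod_replicate]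
  rcases eq_or_ne q 0 with rfl | hq
  · rcases isEmpty_or_nonempty n with hn | hn
    · have : R = 0 := by
        rw [← Multiset.card_eq_zero, h, Fintype.card_eq_zero]
      simp [this]
    · have hcpos : 0 < Multiset.card R := by rw [h]; exact Fintype.card_pos
      obtain ⟨μ, hμ⟩ := Multiset.card_pos_iff_exists_mem.mp hcpos
      rw [map_zero]
      rw [Matrix.det_zero]
      symm
      apply Multiset.prod_eq_zero
      simp only [Multiset.mem_map]
      exact ⟨μ, hμ, by simp⟩
  · have hfac : q = C q.leadingCoeff * (q.roots.map fun a => X - C a).prod :=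
      Polynomial.Splits.eq_prod_roots (IsAlgClosed.splits q)
    have key : D q = E q := by
      conv_lhs => rw [hfac]
      conv_rhs => rw [hfac]
      rw [_root_.map_mul, _root_.map_mul, map_multiset_prod, map_multiset_prod, Multiset.map_map,
        Multiset.map_map]
      congr 1
      · show ((Polynomial.aeval A) (C q.leadingCoeff)).det = _
        simp [E, Algebra.algebraMap_eq_smul_one, h, Multiset.map_const', Multiset.prod_replicate]
      · congr 1
        apply Multiset.map_congr rfl
        intro a _
        exact hDE a
    exact key

/-- A negation-invariant multiset of nonzero complex numbers has even cardinality. -/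
lemma auxEven : ∀ (k : ℕ) (s : Multiset ℂ), Multiset.card s = k →
    s.map (fun x => -x) = s → (0 : ℂ) ∉ s → Even k := by
  intro k
  induction k using Nat.strong_induction_on with
  | _ k ih =>
    intro s hcard hmap h0
    rcases eq_or_ne s 0 with rfl | hs
    · subst hcard; simp
    obtain ⟨a, ha⟩ := Multiset.exists_mem_of_ne_zero hs
    have hna : -a ∈ s := by
      have : -a ∈ s.map (fun x => -x) := Multiset.mem_map_of_mem _ ha
      rwa [hmap] at this
    have hane : -a ≠ a := by
      intro hcontra
      apply h0
      have h2 : a = 0 := by linear_combination -hcontra / 2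
      rwa [← h2]
    have hna' : -a ∈ s.erase a := Multiset.mem_erase_of_ne hane |>.mpr hna
    set t := (s.erase a).erase (-a) with ht
    have hst : s = a ::ₘ (-a) ::ₘ t := by
      rw [ht, Multiset.cons_erase hna', Multiset.cons_erase ha]
    have hcardt : Multiset.card t + 2 = k := by
      rw [hst] at hcard; simp at hcard; omega
    have hmapt : t.map (fun x => -x) = t := by
      have h3 : (a ::ₘ (-a) ::ₘ t).map (fun x => -x) = a ::ₘ (-a) ::ₘ t := by
        rw [← hst, hmap, hst]
      simp only [Multiset.map_cons, neg_neg] at h3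
      rw [Multiset.cons_swap] at h3
      exact (Multiset.cons_inj_right _).mp ((Multiset.cons_inj_right _).mp h3)
    have h0t : (0 : ℂ) ∉ t := fun h => h0 (by rw [hst]; simp [h])
    obtain ⟨c, hc⟩ := ih (Multiset.card t) (by omega) t rfl hmapt h0t
    exact ⟨c + 1, by omega⟩

lemma mapNegFilter (R : Multiset ℂ) (hR : R.map (fun x => -x) = R)
    (Q : ℂ → Prop) [DecidablePred Q] (hQ : ∀ x, Q (-x) ↔ Q x) :
    (R.filter Q).map (fun x => -x) = R.filter Q := by
  have h1 : (R.map fun x => -x).filter Q = ((R.filter (Q ∘ fun x => -x)).map fun x => -x) :=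
    Multiset.filter_map (p := Q) (fun x => -x) R
  rw [hR] at h1
  have h2 : R.filter (Q ∘ fun x => -x) = R.filter Q :=
    Multiset.filter_congr (fun x _ => by simp only [Function.comp]; exact hQ x)
  rw [h2] at h1
  exact h1.symm

/-- Filtering a negation-invariant multiset of even cardinality by an even predicate
yields an even cardinality. -/
lemma evenFilter (R : Multiset ℂ) (hR : R.map (fun x => -x) = R)
    (hcard : Even (Multiset.card R)) (P : ℂ → Prop) [DecidablePred P]
    (hP : ∀ x, P (-x) ↔ P x) : Even (Multiset.card (R.filter P)) := by
  classical
  have split : ∀ (s : Multiset ℂ), s.map (fun x => -x) = s →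
      Multiset.card s = Multiset.count 0 s + Multiset.card (s.filter (fun x => ¬ x = 0)) := by
    intro s _
    conv_lhs => rw [← Multiset.filter_add_not (fun x => x = 0) s]
    rw [Multiset.card_add, Multiset.count_eq_card_filter_eq]
    congr 2
    exact Multiset.filter_congr (fun x _ => eq_comm)
  have evenNZ : ∀ (s : Multiset ℂ), s.map (fun x => -x) = s →
      Even (Multiset.card (s.filter (fun x => ¬ x = 0))) := by
    intro s hs
    refine auxEven _ _ rfl (mapNegFilter s hs _ (fun x => by simp)) ?_
    simp
  have h0R : Even (Multiset.count 0 R) := by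
    have h1 := split R hR
    have h2 := evenNZ R hR
    obtain ⟨c, hc⟩ := hcard; obtain ⟨d, hd⟩ := h2
    exact ⟨c - d, by omega⟩
  set T := R.filter P with hT
  have hTmap : T.map (fun x => -x) = T := mapNegFilter R hR P hP
  have h1 := split T hTmap
  have h2 := evenNZ T hTmap
  have h0T : Even (Multiset.count 0 T) := by
    rw [hT, Multiset.count_filter]
    split
    · exact h0R
    · exact Even.zero
  obtain ⟨c, hc⟩ := h0T; obtain ⟨d, hd⟩ := h2
  exact ⟨c + d, by omega⟩

/-- every eigenvalue of `K(ζ)` has even algebraic multiplicity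
(`m` even, `X` invertible). -/
theorem stmt6 (m : ℕ) (hm : Even m) (X Y : Matrix (Fin m) (Fin m) ℝ)
    (hX : Xᵀ = -X) (hY : Yᵀ = Y) (hXinv : IsUnit X)
    (ζ : ℂ) (hinv : IsUnit (Gpencil m X Y ζ)) (θ : ℂ) :
    Even ((Kzeta' m X Y ζ).charpoly.rootMultiplicity θ) := by
  classical
  set Xc : Matrix (Fin m) (Fin m) ℂ := X.map Complex.ofReal with hXcdef
  set Yc : Matrix (Fin m) (Fin m) ℂ := Y.map Complex.ofReal with hYcdef
  have hXcT : Xcᵀ = -Xc := by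
    ext i j
    have := congrFun (congrFun hX i) j
    simp only [Matrix.transpose_apply, Matrix.neg_apply] at this ⊢
    simp [hXcdef, Matrix.map_apply, this]
  have hYcT : Ycᵀ = Yc := by
    ext i j
    have := congrFun (congrFun hY i) j
    simp only [Matrix.transpose_apply] at this ⊢
    simp [hYcdef, Matrix.map_apply, this]
  have hXcdet : IsUnit Xc.det := by
    have h1 : Xc.det = Complex.ofReal X.det := by
      rw [hXcdef]
      exact (RingHom.map_det Complex.ofRealHom X).symm
    rw [h1, isUnit_iff_ne_zero]
    have := (Matrix.isUnit_iff_isUnit_det X).mp hXinv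
    simpa using this.ne_zero
  have hXXi : Xc * Xc⁻¹ = 1 := Matrix.mul_nonsing_inv _ hXcdet
  have hXiX : Xc⁻¹ * Xc = 1 := Matrix.nonsing_inv_mul _ hXcdet
  set A : Matrix (Fin m) (Fin m) ℂ := Xc⁻¹ * Yc with hAdef
  have hG : Gpencil m X Y ζ = Xc * (A + ζ • 1) := by
    have h : Xc * (A + ζ • 1) = ζ • Xc + Yc := by
      rw [hAdef, mul_add, mul_smul_comm, mul_one, ← mul_assoc, hXXi, one_mul]
      abel
    rw [h, Gpencil]
  have hGm : Gpencil m X Y (-ζ) = Xc * (A - ζ • 1) := by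
    have h : Xc * (A - ζ • 1) = (-ζ) • Xc + Yc := by
      rw [hAdef, mul_sub, mul_smul_comm, mul_one, ← mul_assoc, hXXi, one_mul, neg_smul]
      abel
    rw [h, Gpencil]
  have hGdet : IsUnit (Gpencil m X Y ζ).det := (Matrix.isUnit_iff_isUnit_det _).mp hinv
  have hU2 : IsUnit (A + ζ • 1).det := by
    have h := hGdet
    rw [hG, Matrix.det_mul] at h
    exact isUnit_of_mul_isUnit_right h
  have hGmdet : IsUnit (Gpencil m X Y (-ζ)).det := by
    have hGt : Gpencil m X Y (-ζ) = (Gpencil m X Y ζ)ᵀ := by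
      rw [Gpencil, Gpencil, Matrix.transpose_add, Matrix.transpose_smul, hXcT, hYcT, smul_neg,
        ← neg_smul]
    rw [hGt, Matrix.det_transpose]
    exact hGdet
  have hU1 : IsUnit (A - ζ • 1).det := by
    have h := hGmdet
    rw [hGm, Matrix.det_mul] at h
    exact isUnit_of_mul_isUnit_right h
  set B : Matrix (Fin m) (Fin m) ℂ := A ^ 2 - (ζ ^ 2) • 1 with hBdef
  have hc : ∀ x : Matrix (Fin m) (Fin m) ℂ, (ζ • (1 : Matrix (Fin m) (Fin m) ℂ)) * x
      = x * (ζ • 1) := fun x => by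
    rw [smul_mul_assoc, one_mul, mul_smul_comm, mul_one]
  have hcc : (ζ • (1 : Matrix (Fin m) (Fin m) ℂ)) * (ζ • 1) = (ζ ^ 2) • 1 := by
    rw [smul_mul_assoc, one_mul, smul_smul, sq]
  have hB1 : B = (A - ζ • 1) * (A + ζ • 1) := by
    rw [hBdef, sq, sub_mul, mul_add, mul_add, hc A, hcc]
    abel
  have hB2 : B = (A + ζ • 1) * (A - ζ • 1) := by
    rw [hBdef, sq, add_mul, mul_sub, mul_sub, hc A, hcc]
    abel
  have hBdet : IsUnit B.det := by
    rw [hB1, Matrix.det_mul]; exact hU1.mul hU2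
  have hK : Kzeta' m X Y ζ = B⁻¹ := by
    rw [Kzeta', hG, hGm, Matrix.mul_inv_rev, Matrix.mul_inv_rev]
    rw [show (A - ζ • 1)⁻¹ * Xc⁻¹ * Xc * ((A + ζ • 1)⁻¹ * Xc⁻¹) * Xc
        = (A - ζ • 1)⁻¹ * (Xc⁻¹ * Xc) * (A + ζ • 1)⁻¹ * (Xc⁻¹ * Xc) by
      simp only [mul_assoc], hXiX, mul_one, mul_one, hB2, Matrix.mul_inv_rev]
  -- spectral part
  set p := A.charpoly with hpdef
  have hmono := A.charpoly_monic
  have hcard : Multiset.card p.roots = m := by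
    rw [(Polynomial.splits_iff_card_roots).mp (IsAlgClosed.splits p)]
    rw [hpdef, Matrix.charpoly_natDegree_eq_dim, Fintype.card_fin]
  set R := p.roots with hRdef
  have detA : ∀ q : ℂ[X], (Polynomial.aeval A q).det = (R.map fun μ => q.eval μ).prod := by
    intro q
    have := detAeval A (by rw [Fintype.card_fin]; exact hcard) q
    simpa [hRdef, hpdef] using this
  -- charpoly (-A) = charpoly A
  have hdXXi : Xc.det * Xc⁻¹.det = 1 := by
    rw [← Matrix.det_mul, hXXi, Matrix.det_one]
  have hnegAT : (-A)ᵀ = Xc * A * Xc⁻¹ := by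
    have hXinvneg : (-Xc)⁻¹ = -(Xc⁻¹) := by
      apply Matrix.inv_eq_right_inv
      rw [neg_mul_neg, hXXi]
    have hAT : Aᵀ = Yc * (-Xc)⁻¹ := by
      rw [hAdef, Matrix.transpose_mul, Matrix.transpose_nonsing_inv, hXcT, hYcT]
    have hXA : Xc * A * Xc⁻¹ = Yc * Xc⁻¹ := by
      rw [hAdef, ← mul_assoc, hXXi, one_mul]
    rw [Matrix.transpose_neg, hAT, hXinvneg, mul_neg, neg_neg, hXA]
  have hcharneg : (-A).charpoly = p := by
    apply Polynomial.funext
    intro t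
    rw [evalCharpoly, evalCharpoly]
    calc (t • (1 : Matrix (Fin m) (Fin m) ℂ) - (-A)).det
        = ((t • (1 : Matrix (Fin m) (Fin m) ℂ) - (-A))ᵀ).det := (Matrix.det_transpose _).symm
      _ = (t • (1 : Matrix (Fin m) (Fin m) ℂ) - Xc * A * Xc⁻¹).det := by
          rw [Matrix.transpose_sub, Matrix.transpose_smul, Matrix.transpose_one, hnegAT]
      _ = (Xc * (t • (1 : Matrix (Fin m) (Fin m) ℂ) - A) * Xc⁻¹).det := by
          congr 1
          rw [mul_sub, sub_mul, mul_smul_comm, mul_one, smul_mul_assoc, hXXi]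
      _ = Xc.det * (t • (1 : Matrix (Fin m) (Fin m) ℂ) - A).det * Xc⁻¹.det := by
          rw [Matrix.det_mul, Matrix.det_mul]
      _ = (t • (1 : Matrix (Fin m) (Fin m) ℂ) - A).det := by
          rw [mul_comm Xc.det, mul_assoc, hdXXi, mul_one]
  have hfac : p = (R.map fun μ => Polynomial.X - C μ).prod :=
    Polynomial.Splits.eq_prod_roots_of_monic (IsAlgClosed.splits p) hmono
  have hnegroots : R.map (fun μ => -μ) = R := by
    have h2 : (-A).charpoly = ((R.map (fun μ => -μ)).map fun μ => Polynomial.X - C μ).prod := by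
      apply Polynomial.funext
      intro t
      rw [evalCharpoly]
      have hq : t • (1 : Matrix (Fin m) (Fin m) ℂ) - (-A) = Polynomial.aeval A (C t + Polynomial.X) := by
        rw [sub_neg_eq_add, map_add, aeval_C, aeval_X, Algebra.algebraMap_eq_smul_one]
      rw [hq, detA, Polynomial.eval_multiset_prod, Multiset.map_map, Multiset.map_map]
      apply congrArg Multiset.prod
      apply Multiset.map_congr rfl
      intro x _
      simp only [Function.comp_apply, eval_add, eval_C, eval_X, eval_sub]
      ring
    have h3 : ((R.map (fun μ => -μ)).map fun μ => Polynomial.X - C μ).prod = (R.map fun μ => Polynomial.X - C μ).prod :=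
      by rw [← h2, hcharneg, hfac]
    have h4 := congrArg Polynomial.roots h3
    rwa [Polynomial.roots_multiset_prod_X_sub_C, Polynomial.roots_multiset_prod_X_sub_C] at h4
  -- determinant of B and nonvanishing of factors
  have hBq : B = Polynomial.aeval A (Polynomial.X ^ 2 - C (ζ ^ 2)) := by
    rw [map_sub, map_pow, aeval_X, aeval_C, Algebra.algebraMap_eq_smul_one, hBdef]
  have hdetB : B.det = (R.map fun μ => μ ^ 2 - ζ ^ 2).prod := by
    rw [hBq, detA]
    apply congrArg Multiset.prod
    apply Multiset.map_congr rfl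
    intro x _
    simp
  have hBdne : B.det ≠ 0 := hBdet.ne_zero
  have hne : ∀ μ ∈ R, μ ^ 2 - ζ ^ 2 ≠ 0 := by
    intro μ hμ h0
    apply hBdne
    rw [hdetB]
    apply Multiset.prod_eq_zero
    rw [← h0]
    exact Multiset.mem_map_of_mem _ hμ
  -- charpoly of B⁻¹
  have hcharK : (B⁻¹).charpoly = (R.map fun μ => Polynomial.X - C ((μ ^ 2 - ζ ^ 2)⁻¹)).prod := by
    apply Polynomial.funext
    intro t
    rw [evalCharpoly]
    have hfact : t • (1 : Matrix (Fin m) (Fin m) ℂ) - B⁻¹ = B⁻¹ * (t • B - 1) := by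
      rw [mul_sub, mul_smul_comm, Matrix.nonsing_inv_mul _ hBdet, mul_one]
    have htB : t • B - 1 = Polynomial.aeval A (C t * (Polynomial.X ^ 2 - C (ζ ^ 2)) - 1) := by
      rw [map_sub, _root_.map_mul, _root_.map_one, aeval_C, ← hBq, Algebra.algebraMap_eq_smul_one,
        smul_mul_assoc, one_mul]
    rw [hfact, Matrix.det_mul, Matrix.det_nonsing_inv, Ring.inverse_eq_inv, htB, detA, hdetB,
      ← Multiset.prod_map_inv, ← Multiset.prod_map_mul, Polynomial.eval_multiset_prod,
      Multiset.map_map]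
    apply congrArg Multiset.prod
    apply Multiset.map_congr rfl
    intro x hx
    simp only [Function.comp_apply, eval_sub, eval_mul, eval_add, eval_pow, eval_X, eval_C,
      eval_one]
    field_simp [hne x hx]
  -- finish
  rw [hK, hcharK, ← Polynomial.count_roots]
  have hroots : ((R.map fun μ => Polynomial.X - C ((μ ^ 2 - ζ ^ 2)⁻¹)).prod).roots
      = R.map (fun μ => (μ ^ 2 - ζ ^ 2)⁻¹) := by
    have := Polynomial.roots_multiset_prod_X_sub_C (R.map fun μ => (μ ^ 2 - ζ ^ 2)⁻¹)
    rwa [Multiset.map_map] at this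
  rw [hroots, Multiset.count_map]
  exact evenFilter R hnegroots (by rwa [hcard]) _ (fun x => by rw [neg_pow, ]; norm_num)
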